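/- If T is a tree on n vertices whose adjacency matrix has nullity h, then the maximum matching in T has size (n - h)/2. -/

import Mathlib

open scoped Classical

/-- Characteristic polynomial of the adjacency matrix of a graph. -/
noncomputable def gCharpoly {V : Type*} [Fintype V] (G : SimpleGraph V) : Polynomial ℝ :=
  letI := Classical.decEq V
  letI := Classical.decRel G.Adj
  (G.adjMatrix ℝ).charpoly

/-- Adjacency eigenvalues listed in non-increasing order (with multiplicity). -/
noncomputable def eigsDesc {V : Type*} [Fintype V] (G : SimpleGraph V) : List ℝ :=
  ((gCharpoly G).roots.sort (· ≤ ·)).reverse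

/-- Number of adjacency eigenvalues in the open interval (-1, 1), with multiplicity. -/
noncomputable def numIn {V : Type*} [Fintype V] (G : SimpleGraph V) : ℕ :=
  ((gCharpoly G).roots.filter (fun x => -1 < x ∧ x < 1)).card

/-- Multiplicity of `lam` as an adjacency eigenvalue. -/
noncomputable def multOf {V : Type*} [Fintype V] (G : SimpleGraph V) (lam : ℝ) : ℕ :=
  (gCharpoly G).roots.count lam

/-- Nullity: dimension of the kernel of the adjacency matrix. -/
noncomputable def gNullity {V : Type*} [Fintype V] (G : SimpleGraph V) : ℕ :=
  letI := Classical.decRel G.Adj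
  Module.finrank ℝ (LinearMap.ker (G.adjMatrix ℝ).mulVecLin)

/-! ### Auxiliary lemmas -/

lemma exists_leaf {V : Type*} [Fintype V] {G : SimpleGraph V} (hG : G.IsAcyclic)
    (hne : ∃ a b, G.Adj a b) : ∃ u v, G.Adj u v ∧ ∀ w, G.Adj u w → w = v := by
  classical
  set S : Set ℕ := {k | ∃ (a b : V) (p : G.Walk a b), p.IsPath ∧ p.length = k} with hS
  obtain ⟨a₀, b₀, hab⟩ := hne
  have h1S : 1 ∈ S := ⟨a₀, b₀, (SimpleGraph.Path.singleton hab).val,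
    (SimpleGraph.Path.singleton hab).property, rfl⟩
  have hbdd : BddAbove S := by
    refine ⟨Fintype.card V, ?_⟩
    rintro k ⟨a, b, p, hp, rfl⟩
    exact le_of_lt hp.length_lt
  have hmem : sSup S ∈ S := Nat.sSup_mem ⟨1, h1S⟩ hbdd
  obtain ⟨a, b, p, hp, hlen⟩ := hmem
  have h1 : 1 ≤ p.length := hlen ▸ le_csSup hbdd h1S
  cases p with
  | nil => simp at h1
  | cons h q =>
    rename_i x
    refine ⟨a, x, h, fun w hw => ?_⟩
    rw [SimpleGraph.Walk.cons_isPath_iff] at hp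
    by_cases hws : w ∈ q.support
    · have ht : (q.takeUntil w hws).IsPath := hp.1.takeUntil hws
      have ha : a ∉ (q.takeUntil w hws).support :=
        fun hc => hp.2 (SimpleGraph.Walk.support_takeUntil_subset _ hws hc)
      have hP : (SimpleGraph.Walk.cons h (q.takeUntil w hws)).IsPath := ht.cons ha
      have := hG.path_unique ⟨_, hP⟩ (SimpleGraph.Path.singleton hw)
      have hval : SimpleGraph.Walk.cons h (q.takeUntil w hws)
          = (SimpleGraph.Path.singleton hw).val := congrArg Subtype.val this
      have := congrArg (fun p => SimpleGraph.Walk.getVert p 1) hval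
      simpa [SimpleGraph.Path.singleton, SimpleGraph.Walk.getVert_cons_succ,
        SimpleGraph.Walk.getVert_zero] using this.symm
    · exfalso
      have hwa : w ∉ (SimpleGraph.Walk.cons h q).support := by
        simp only [SimpleGraph.Walk.support_cons, List.mem_cons]
        push_neg
        exact ⟨fun hcc => G.ne_of_adj hw hcc.symm, hws⟩
      have hP : (SimpleGraph.Walk.cons hw.symm (SimpleGraph.Walk.cons h q)).IsPath :=
        SimpleGraph.Walk.IsPath.cons (by rw [SimpleGraph.Walk.cons_isPath_iff]; exact hp) hwa
      have : (SimpleGraph.Walk.cons hw.symm (SimpleGraph.Walk.cons h q)).length ∈ S :=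
        ⟨_, _, _, hP, rfl⟩
      have hle := le_csSup hbdd this
      simp only [SimpleGraph.Walk.length_cons] at hle hlen
      omega

lemma ker_mem_iff {W : Type*} [Fintype W] (H : SimpleGraph W) [DecidableRel H.Adj] (x : W → ℝ) :
    x ∈ LinearMap.ker (H.adjMatrix ℝ).mulVecLin ↔
      ∀ w, ∑ z, (if H.Adj w z then x z else 0) = 0 := by
  simp [LinearMap.mem_ker, Matrix.mulVecLin_apply, funext_iff, Matrix.mulVec,
    dotProduct, SimpleGraph.adjMatrix_apply, ite_mul]

lemma nullity_step {V : Type*} [Fintype V] (G : SimpleGraph V) {u v : V} (hadj : G.Adj u v)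
    (hleaf : ∀ w, G.Adj u w → w = v) :
    gNullity G = gNullity (G.induce {x : V | x ≠ u ∧ x ≠ v}) := by
  classical
  set s : Set V := {x : V | x ≠ u ∧ x ≠ v} with hs
  have huv : u ≠ v := G.ne_of_adj hadj
  have hsplit : ∀ f : V → ℝ, ∑ z, f z = f u + f v + ∑ z : s, f ↑z := by
    intro f
    have h1 : ∑ z ∈ ({u, v} : Finset V)ᶜ, f z = ∑ z : s, f ↑z := by
      refine Finset.sum_subtype _ (fun x => ?_) f
      simp [hs]
    rw [← h1, ← Finset.sum_add_sum_compl ({u, v} : Finset V) f,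
      Finset.sum_pair huv]
  have hnadj_u : ∀ a : s, ¬ G.Adj ↑a u := by
    rintro a hc
    exact a.2.2 (hleaf _ hc.symm)
  have hsum_u : ∀ x : V → ℝ, ∑ z, (if G.Adj u z then x z else 0) = x v := by
    intro x
    rw [Finset.sum_eq_single_of_mem v (Finset.mem_univ v)]
    · rw [if_pos hadj]
    · intro z _ hzv
      rw [if_neg (fun hc => hzv (hleaf z hc))]
  have hxv0 : ∀ x ∈ LinearMap.ker (G.adjMatrix ℝ).mulVecLin, x v = 0 := by
    intro x hx
    have := (ker_mem_iff G x).mp hx u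
    rwa [hsum_u] at this
  have hres : ∀ x ∈ LinearMap.ker (G.adjMatrix ℝ).mulVecLin,
      (fun a : s => x ↑a) ∈ LinearMap.ker ((G.induce s).adjMatrix ℝ).mulVecLin := by
    intro x hx
    rw [ker_mem_iff]
    intro a
    have h0 := (ker_mem_iff G x).mp hx ↑a
    rw [hsplit (fun z => if G.Adj ↑a z then x z else 0)] at h0
    have hu0 : (if G.Adj ↑a u then x u else 0) = 0 := if_neg (hnadj_u a)
    have hv0 : (if G.Adj ↑a v then x v else 0) = 0 := by
      rw [hxv0 x hx]; simp
    rw [hu0, hv0] at h0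
    have hconv : ∀ b : s, ((G.induce s).Adj a b ↔ G.Adj ↑a ↑b) := by
      intro b; simp [SimpleGraph.comap_adj]
    calc ∑ b : s, (if (G.induce s).Adj a b then x ↑b else 0)
        = ∑ b : s, (if G.Adj ↑a ↑b then x ↑b else 0) := by
          refine Finset.sum_congr rfl fun b _ => ?_
          simp only [hconv b]
      _ = 0 := by linarith
  let φ : LinearMap.ker (G.adjMatrix ℝ).mulVecLin →ₗ[ℝ]
      LinearMap.ker ((G.induce s).adjMatrix ℝ).mulVecLin :=
    { toFun := fun x => ⟨fun a => x.1 ↑a, hres x.1 x.2⟩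
      map_add' := fun x y => rfl
      map_smul' := fun c x => rfl }
  have hinj : Function.Injective φ := by
    intro x y hxy
    have hxy' : ∀ a : s, x.1 ↑a = y.1 ↑a := fun a => congrFun (congrArg Subtype.val hxy) a
    apply Subtype.ext
    set d : V → ℝ := fun w => x.1 w - y.1 w with hd
    have hdmem : d ∈ LinearMap.ker (G.adjMatrix ℝ).mulVecLin := by
      have := sub_mem x.2 y.2
      exact this
    have hdv : d v = 0 := hxv0 d hdmem
    have hds : ∀ a : s, d ↑a = 0 := fun a => by simp [hd, hxy' a]
    have hdu : d u = 0 := by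
      have h0 := (ker_mem_iff G d).mp hdmem v
      rw [hsplit (fun z => if G.Adj v z then d z else 0)] at h0
      have h1 : (if G.Adj v u then d u else 0) = d u := if_pos hadj.symm
      have h2 : (if G.Adj v v then d v else 0) = 0 := by rw [hdv]; simp
      have h3 : ∑ b : s, (if G.Adj v ↑b then d ↑b else 0) = 0 := by
        apply Finset.sum_eq_zero
        intro b _
        rw [hds b]; simp
      rw [h1, h2, h3] at h0
      linarith
    funext w
    have : d w = 0 := by
      by_cases hwu : w = u
      · rw [hwu]; exact hdu
      by_cases hwv : w = v
      · rw [hwv]; exact hdv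
      exact hds ⟨w, hwu, hwv⟩
    have := sub_eq_zero.mp (by simpa [hd] using this)
    exact this
  have hsurj : Function.Surjective φ := by
    rintro ⟨y, hy⟩
    set c : ℝ := -∑ b : s, (if G.Adj v ↑b then y b else 0) with hc
    set x : V → ℝ := fun w =>
      if hw : w = u then c else if hw2 : w = v then 0 else y ⟨w, hw, hw2⟩ with hx
    have hxu : x u = c := by simp [hx]
    have hxvv : x v = 0 := by simp [hx, huv.symm]
    have hxs : ∀ b : s, x ↑b = y b := by
      intro b
      simp only [hx, dif_neg b.2.1, dif_neg b.2.2]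
    have hxmem : x ∈ LinearMap.ker (G.adjMatrix ℝ).mulVecLin := by
      rw [ker_mem_iff]
      intro w
      by_cases hwu : w = u
      · subst hwu
        rw [hsum_u x, hxvv]
      by_cases hwv : w = v
      · subst hwv
        rw [hsplit (fun z => if G.Adj w z then x z else 0)]
        have h1 : (if G.Adj w u then x u else 0) = c := by rw [if_pos hadj.symm, hxu]
        have h2 : (if G.Adj w w then x w else 0) = 0 := by simp
        have h3 : ∑ b : s, (if G.Adj w ↑b then x ↑b else 0)
            = ∑ b : s, (if G.Adj w ↑b then y b else 0) := by
          refine Finset.sum_congr rfl fun b _ => ?_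
          rw [hxs b]
        rw [h1, h2, h3]
        simp [hc]
      · have hws : w ∈ s := ⟨hwu, hwv⟩
        rw [hsplit (fun z => if G.Adj w z then x z else 0)]
        have h1 : (if G.Adj w u then x u else 0) = 0 :=
          if_neg (hnadj_u ⟨w, hws⟩)
        have h2 : (if G.Adj w v then x v else 0) = 0 := by rw [hxvv]; simp
        have h3 : ∑ b : s, (if G.Adj w ↑b then x ↑b else 0) = 0 := by
          have h0 := (ker_mem_iff (G.induce s) y).mp hy ⟨w, hws⟩
          calc ∑ b : s, (if G.Adj w ↑b then x ↑b else 0)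
              = ∑ b : s, (if (G.induce s).Adj ⟨w, hws⟩ b then y b else 0) := by
                refine Finset.sum_congr rfl fun b _ => ?_
                rw [hxs b]
                congr 1
            _ = 0 := h0
        rw [h1, h2, h3]
        ring
    refine ⟨⟨x, hxmem⟩, ?_⟩
    apply Subtype.ext
    funext b
    exact hxs b
  unfold gNullity
  exact LinearEquiv.finrank_eq (LinearEquiv.ofBijective φ ⟨hinj, hsurj⟩)

lemma edgeSet_map' {V W : Type*} {G : SimpleGraph V} {G' : SimpleGraph W} (f : G →g G')
    (M : G.Subgraph) : (M.map f).edgeSet = Sym2.map f '' M.edgeSet := by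
  ext e
  induction e with
  | _ a b =>
    simp only [SimpleGraph.Subgraph.mem_edgeSet, SimpleGraph.Subgraph.map_adj, Relation.Map,
      Set.mem_image]
    constructor
    · rintro ⟨x, y, h, rfl, rfl⟩
      exact ⟨s(x, y), h, Sym2.map_pair_eq f x y⟩
    · rintro ⟨e', he', hme⟩
      induction e' with
      | _ x y =>
        rw [Sym2.map_pair_eq] at hme
        rcases Sym2.eq_iff.mp hme with ⟨rfl, rfl⟩ | ⟨rfl, rfl⟩
        · exact ⟨x, y, he', rfl, rfl⟩
        · exact ⟨y, x, M.adj_symm he', rfl, rfl⟩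

lemma matching_step {V : Type*} [Fintype V] (G : SimpleGraph V) {u v : V}
    (hadj : G.Adj u v) (hleaf : ∀ w, G.Adj u w → w = v) {m' : ℕ}
    (hgr : IsGreatest {k : ℕ | ∃ M : (G.induce {x : V | x ≠ u ∧ x ≠ v}).Subgraph,
        M.IsMatching ∧ M.edgeSet.ncard = k} m') :
    IsGreatest {k : ℕ | ∃ M : G.Subgraph, M.IsMatching ∧ M.edgeSet.ncard = k} (m' + 1) := by
  classical
  set s : Set V := {x : V | x ≠ u ∧ x ≠ v} with hs
  have huv : u ≠ v := G.ne_of_adj hadj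
  set f : G.induce s ↪g G := SimpleGraph.Embedding.induce s with hf
  have hfinj : Function.Injective ⇑f.toHom := Subtype.val_injective
  constructor
  · obtain ⟨M', hM', hcard'⟩ := hgr.1
    set N : G.Subgraph := (M'.map f.toHom) ⊔ G.subgraphOfAdj hadj with hN
    have hmapM : (M'.map f.toHom).IsMatching := hM'.map f.toHom hfinj
    have hdisj : Disjoint (M'.map f.toHom).support (G.subgraphOfAdj hadj).support := by
      rw [Set.disjoint_left]
      intro x hx1 hx2
      have hx1' := (M'.map f.toHom).support_subset_verts hx1
      rw [SimpleGraph.Subgraph.map_verts] at hx1'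
      obtain ⟨a, _, rfl⟩ := hx1'
      have hx2' := (G.subgraphOfAdj hadj).support_subset_verts hx2
      simp only [SimpleGraph.subgraphOfAdj_verts, Set.mem_insert_iff,
        Set.mem_singleton_iff] at hx2'
      rcases hx2' with h | h
      · exact a.2.1 h
      · exact a.2.2 h
    refine ⟨N, hmapM.sup (SimpleGraph.Subgraph.IsMatching.subgraphOfAdj hadj) hdisj, ?_⟩
    rw [hN, SimpleGraph.Subgraph.edgeSet_sup, SimpleGraph.edgeSet_subgraphOfAdj,
      edgeSet_map' f.toHom M']
    have hedisj : Disjoint (Sym2.map f.toHom '' M'.edgeSet) ({s(u, v)} : Set (Sym2 V)) := by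
      rw [Set.disjoint_right]
      intro e he hc
      rw [Set.mem_singleton_iff] at he
      subst he
      obtain ⟨e', _, hme⟩ := hc
      induction e' with
      | _ x y =>
        rw [Sym2.map_pair_eq] at hme
        rcases Sym2.eq_iff.mp hme with ⟨h1, _⟩ | ⟨h1, _⟩
        · exact x.2.1 h1
        · exact x.2.2 h1
    rw [Set.ncard_union_eq hedisj (Set.toFinite _) (Set.toFinite _),
      Set.ncard_image_of_injective _ (Sym2.map.injective hfinj), hcard',
      Set.ncard_singleton]
  · rintro k ⟨M, hM, rfl⟩
    set M'' : (G.induce s).Subgraph :=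
      { verts := {a : s | ∃ b : s, M.Adj ↑a ↑b}
        Adj := fun a b => M.Adj ↑a ↑b
        adj_sub := fun {a b} h => by
          simpa [SimpleGraph.comap_adj] using M.adj_sub h
        edge_vert := fun {a b} h => ⟨b, h⟩
        symm := ⟨fun a b h => M.adj_symm h⟩ } with hM''
    have hmatch'' : M''.IsMatching := by
      rintro a ⟨b, hb⟩
      obtain ⟨w, hw, hwuniq⟩ := hM (M.edge_vert hb)
      have hbw : (b : V) = w := hwuniq _ hb
      refine ⟨b, hb, ?_⟩
      intro y hy
      exact Subtype.ext ((hwuniq _ hy).trans hbw.symm)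
    have hsub : M.edgeSet ⊆ (Sym2.map (Subtype.val : s → V) '' M''.edgeSet) ∪
        {e | e ∈ M.edgeSet ∧ v ∈ e} := by
      intro e he
      induction e with
      | _ a b =>
        rw [SimpleGraph.Subgraph.mem_edgeSet] at he
        by_cases hav : a = v
        · subst hav
          exact Or.inr ⟨SimpleGraph.Subgraph.mem_edgeSet.mpr he, Sym2.mem_mk_left _ _⟩
        by_cases hbv : b = v
        · subst hbv
          exact Or.inr ⟨SimpleGraph.Subgraph.mem_edgeSet.mpr he, Sym2.mem_mk_right _ _⟩
        have hau : a ≠ u := by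
          rintro rfl
          exact hbv (hleaf b (M.adj_sub he))
        have hbu : b ≠ u := by
          rintro rfl
          exact hav (hleaf a (M.adj_sub he.symm))
        left
        refine ⟨s(⟨a, hau, hav⟩, ⟨b, hbu, hbv⟩), ?_, Sym2.map_pair_eq _ _ _⟩
        rwa [SimpleGraph.Subgraph.mem_edgeSet]
    have hDone : {e | e ∈ M.edgeSet ∧ v ∈ e}.ncard ≤ 1 := by
      by_cases hvM : v ∈ M.verts
      · obtain ⟨w, hw, hwuniq⟩ := hM hvM
        have : {e | e ∈ M.edgeSet ∧ v ∈ e} ⊆ {s(v, w)} := by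
          rintro e ⟨he, hve⟩
          induction e with
          | _ a b =>
            rw [SimpleGraph.Subgraph.mem_edgeSet] at he
            rw [Set.mem_singleton_iff]
            rcases Sym2.mem_iff.mp hve with rfl | rfl
            · rw [hwuniq b he]
            · rw [hwuniq a he.symm, Sym2.eq_swap]
        calc _ ≤ ({s(v, w)} : Set (Sym2 V)).ncard := Set.ncard_le_ncard this (Set.toFinite _)
          _ = 1 := Set.ncard_singleton _
      · have : {e | e ∈ M.edgeSet ∧ v ∈ e} = ∅ := by
          ext e
          simp only [Set.mem_setOf_eq, Set.mem_empty_iff_false, iff_false, not_and]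
          intro he hve
          induction e with
          | _ a b =>
            rw [SimpleGraph.Subgraph.mem_edgeSet] at he
            rcases Sym2.mem_iff.mp hve with rfl | rfl
            · exact hvM (M.edge_vert he)
            · exact hvM (M.edge_vert he.symm)
        rw [this, Set.ncard_empty]
        exact Nat.zero_le 1
    have hle := Set.ncard_le_ncard hsub (Set.toFinite _)
    have hle2 := Set.ncard_union_le (Sym2.map (Subtype.val : s → V) '' M''.edgeSet)
      {e | e ∈ M.edgeSet ∧ v ∈ e}
    rw [Set.ncard_image_of_injective _ (Sym2.map.injective Subtype.val_injective)] at hle2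
    have hmem'' : M''.edgeSet.ncard ∈ {k : ℕ | ∃ M : (G.induce s).Subgraph,
        M.IsMatching ∧ M.edgeSet.ncard = k} := ⟨M'', hmatch'', rfl⟩
    have := hgr.2 hmem''
    omega

lemma base_nullity {V : Type*} [Fintype V] (G : SimpleGraph V) (h : ∀ a b, ¬ G.Adj a b) :
    gNullity G = Fintype.card V := by
  classical
  unfold gNullity
  have hA : G.adjMatrix ℝ = 0 := by
    ext a b
    simp [SimpleGraph.adjMatrix_apply, h a b]
  rw [hA, Matrix.mulVecLin_zero, LinearMap.ker_zero, finrank_top,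
    Module.finrank_fintype_fun_eq_card]

lemma base_matching {V : Type*} [Fintype V] (G : SimpleGraph V) (h : ∀ a b, ¬ G.Adj a b) :
    IsGreatest {k : ℕ | ∃ M : G.Subgraph, M.IsMatching ∧ M.edgeSet.ncard = k} 0 := by
  constructor
  · refine ⟨⊥, ?_, ?_⟩
    · intro x hx
      rw [SimpleGraph.Subgraph.verts_bot] at hx
      exact absurd hx (Set.notMem_empty _)
    · rw [SimpleGraph.Subgraph.edgeSet_bot, Set.ncard_empty]
  · rintro k ⟨M, hM, rfl⟩
    have : M.edgeSet = ∅ := by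
      ext e
      induction e with
      | _ a b =>
        simp only [SimpleGraph.Subgraph.mem_edgeSet, Set.mem_empty_iff_false, iff_false]
        exact fun hc => h a b (M.adj_sub hc)
    rw [this, Set.ncard_empty]


lemma forest_main : ∀ (n : ℕ) (V : Type u) [Fintype V] (G : SimpleGraph V),
    G.IsAcyclic → Fintype.card V = n →
    ∃ m : ℕ,
      IsGreatest {k : ℕ | ∃ M : G.Subgraph, M.IsMatching ∧ M.edgeSet.ncard = k} m ∧
      2 * m + gNullity G = n := by
  intro n
  induction n using Nat.strong_induction_on with
  | _ n IH =>
    intro V _ G hacyc hcard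
    by_cases hE : ∃ a b, G.Adj a b
    · obtain ⟨u, v, hadj, hleaf⟩ := exists_leaf hacyc hE
      set s : Set V := {x : V | x ≠ u ∧ x ≠ v} with hs
      have huv : u ≠ v := G.ne_of_adj hadj
      have hn2 : 2 ≤ n := by
        rw [← hcard]
        exact Fintype.one_lt_card_iff.mpr ⟨u, v, huv⟩
      have hcards : Fintype.card s = n - 2 := by
        rw [Fintype.card_subtype]
        have heq : (Finset.univ.filter (· ∈ s)) = Finset.univ \ {u, v} := by
          ext x
          simp [hs, not_or]
        rw [heq, Finset.card_sdiff_of_subset (Finset.subset_univ _), Finset.card_pair huv,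
          Finset.card_univ, hcard]
      have hacyc' : (G.induce s).IsAcyclic := by
        intro a c hc
        set ff : G.induce s ↪g G := SimpleGraph.Embedding.induce s with hff
        have hffinj : Function.Injective ⇑ff.toHom := Subtype.val_injective
        exact hacyc _
          ((SimpleGraph.Walk.map_isCycle_iff_of_injective hffinj).mpr hc)
      obtain ⟨m', hgr', heq'⟩ := IH (n - 2) (by omega) s (G.induce s) hacyc' hcards
      refine ⟨m' + 1, matching_step G hadj hleaf hgr', ?_⟩
      have hnn : gNullity G = gNullity (G.induce s) := nullity_step G hadj hleaf
      omega
    · push_neg at hE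
      exact ⟨0, base_matching G hE, by rw [base_nullity G hE]; omega⟩

theorem stmt1 {V : Type*} [Fintype V] (T : SimpleGraph V) (hT : T.IsTree) :
    ∃ m : ℕ,
      IsGreatest {k : ℕ | ∃ M : T.Subgraph, M.IsMatching ∧ M.edgeSet.ncard = k} m ∧
      2 * m + gNullity T = Fintype.card V := by
  exact forest_main (Fintype.card V) V T hT.IsAcyclic rfl
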